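/- Let the planted distribution be: sample G ~ G(n,p), sample S ⊆ [n] including each vertex independently with probability k/n, and remove all edges inside S to get G̃. For any T ⊆ [n] and any finite graph α with vertex set V(α) ⊆ [n] and edge set E(α) ⊆ binom([n],2), letting x_T(S) = 1 if T ⊆ S and 0 otherwise, E[x_T(S) · χ_{E(α)}(G̃)] = (k/n)^{|V(α) ∪ T|} · (p/(1-p))^{|E(α)|/2}, where χ_{E(α)}(G̃) = ∏_{e ∈ E(α)} χ(G̃_e) with the p-biased characters χ(0) = √(p/(1-p)), χ(1) = -√((1-p)/p). -/

import Mathlib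

open MeasureTheory

/-- The Bernoulli(p) measure on `Bool` (with `p` clamped into `[0,1]`). -/
noncomputable def bern (p : ℝ) : Measure Bool :=
  (PMF.bernoulli (min (Real.toNNReal p) 1) (min_le_right _ _)).toMeasure

/-- The planted distribution: an Erdős–Rényi graph `G(n,p)` together with an
independent random vertex subset `S` containing each vertex with probability `κ`. -/
noncomputable def PlantedMeasure (n : ℕ) (p κ : ℝ) :
    Measure ((Sym2 (Fin n) → Bool) × (Fin n → Bool)) :=
  (Measure.pi fun _ : Sym2 (Fin n) => bern p).prod (Measure.pi fun _ : Fin n => bern κ)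

/-- The p-biased character: `χ(0) = √(p/(1-p))`, `χ(1) = -√((1-p)/p)`. -/
noncomputable def chiB (p : ℝ) : Bool → ℝ := fun b =>
  if b then -Real.sqrt ((1 - p) / p) else Real.sqrt (p / (1 - p))

open Classical in
/-- `χ(G̃_e)`: the p-biased character of the edge `e` in the graph `ω.1` with all
edges inside the planted set `ω.2` removed. -/
noncomputable def tildeChi (n : ℕ) (p : ℝ)
    (ω : (Sym2 (Fin n) → Bool) × (Fin n → Bool)) (e : Sym2 (Fin n)) : ℝ :=
  if ω.1 e = true ∧ ¬(∀ x ∈ e, ω.2 x = true) then chiB p true else chiB p false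

instance bern_prob (p : ℝ) : IsProbabilityMeasure (bern p) :=
  PMF.toMeasure.isProbabilityMeasure _

lemma bern_integral {q : ℝ} (h0 : 0 ≤ q) (h1 : q ≤ 1) (f : Bool → ℝ) :
    ∫ b, f b ∂(bern q) = (1 - q) * f false + q * f true := by
  have hle : Real.toNNReal q ≤ 1 := Real.toNNReal_le_one.mpr h1
  have hmin : min (Real.toNNReal q) 1 = Real.toNNReal q := min_eq_left hle
  rw [integral_fintype Integrable.of_finite]
  simp only [Fintype.sum_bool, bern, hmin, measureReal_def,
    PMF.toMeasure_apply_singleton _ _ (measurableSet_singleton _), PMF.bernoulli_apply]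
  simp only [Bool.cond_true, Bool.cond_false, smul_eq_mul]
  rw [ENNReal.coe_toReal, ENNReal.coe_toReal, NNReal.coe_sub hle, NNReal.coe_one,
    Real.coe_toNNReal _ h0]
  ring

lemma pi_integral_prod {ι : Type*} [Fintype ι] (μ : Measure Bool) [IsProbabilityMeasure μ]
    (f : ι → Bool → ℝ) :
    ∫ x, ∏ i, f i (x i) ∂(Measure.pi fun _ : ι => μ) = ∏ i, ∫ b, f i b ∂μ := by
  letI : MeasureSpace Bool := ⟨μ⟩
  exact MeasureTheory.integral_fintype_prod_eq_prod f

lemma ind_prod {ι : Type*} [DecidableEq ι] (A : Finset ι) (s : ι → Bool) :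
    (if ∀ v ∈ A, s v = true then (1 : ℝ) else 0)
      = ∏ v ∈ A, (if s v = true then (1 : ℝ) else 0) := by
  by_cases h : ∀ v ∈ A, s v = true
  · rw [if_pos h, Finset.prod_congr rfl fun v hv => if_pos (h v hv), Finset.prod_const_one]
  · push_neg at h
    obtain ⟨v, hv, hsv⟩ := h
    have h0 : (if s v = true then (1:ℝ) else 0) = 0 := if_neg hsv
    rw [if_neg (by push_neg; exact ⟨v, hv, hsv⟩), Finset.prod_eq_zero hv h0]


theorem stmt14 (n : ℕ) (p k : ℝ) (hp0 : 0 < p) (hp1 : p < 1)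
    (hk0 : 0 ≤ k) (hkn : k ≤ n)
    (T : Finset (Fin n)) (Eα : Finset (Sym2 (Fin n))) (Vα : Finset (Fin n))
    (hdiag : ∀ e ∈ Eα, ¬e.IsDiag)
    (hVα : ∀ v : Fin n, v ∈ Vα ↔ ∃ e ∈ Eα, v ∈ e) :
    ∫ ω, (if ∀ t ∈ T, ω.2 t = true then (1 : ℝ) else 0) *
          ∏ e ∈ Eα, tildeChi n p ω e ∂(PlantedMeasure n p (k / n))
      = (k / n) ^ (Vα ∪ T).card * Real.sqrt (p / (1 - p)) ^ Eα.card := by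
  classical
  have hq0 : (0:ℝ) ≤ k / n := div_nonneg hk0 (Nat.cast_nonneg n)
  have hq1 : k / n ≤ 1 := div_le_one_of_le₀ hkn (Nat.cast_nonneg n)
  have h1p : (0:ℝ) < 1 - p := by linarith
  set c := Real.sqrt (p / (1 - p)) with hc
  -- expectation of chiB under bern p is zero
  have hchi : ∫ b, chiB p b ∂(bern p) = 0 := by
    rw [bern_integral hp0.le hp1.le]
    simp only [chiB, if_true, if_false, Bool.false_eq_true]
    rw [Real.sqrt_div hp0.le, Real.sqrt_div h1p.le]
    have e1 : Real.sqrt p ^ 2 = p := Real.sq_sqrt hp0.le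
    have e2 : Real.sqrt (1 - p) ^ 2 = 1 - p := Real.sq_sqrt h1p.le
    have hsp : (0:ℝ) < Real.sqrt p := Real.sqrt_pos.mpr hp0
    have hs1p : (0:ℝ) < Real.sqrt (1 - p) := Real.sqrt_pos.mpr h1p
    field_simp
    nlinarith [e1, e2]
  have hcfalse : chiB p false = c := by simp [chiB, hc]
  -- inner integral over the graph, for a fixed subset s
  have key : ∀ s : Fin n → Bool,
      (∫ g, (if ∀ t ∈ T, s t = true then (1:ℝ) else 0) *
          ∏ e ∈ Eα, tildeChi n p (g, s) e ∂(Measure.pi fun _ : Sym2 (Fin n) => bern p))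
        = (if ∀ v ∈ Vα ∪ T, s v = true then (1:ℝ) else 0) * c ^ Eα.card := by
    intro s
    set F : Sym2 (Fin n) → Bool → ℝ := fun e b =>
      if e ∈ Eα then (if ∀ x ∈ e, s x = true then c else chiB p b) else 1 with hF
    have hrw : ∀ g : Sym2 (Fin n) → Bool,
        ∏ e ∈ Eα, tildeChi n p (g, s) e = ∏ e, F e (g e) := by
      intro g
      rw [← Finset.prod_subset (Finset.subset_univ Eα)
        (fun e _ he => by simp [hF, he])]
      refine Finset.prod_congr rfl fun e he => ?_
      by_cases hall : ∀ x ∈ e, s x = true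
      · simp only [tildeChi, hF, he, hall, hcfalse, if_true, if_pos hall]
        rw [if_neg]
        rintro ⟨-, hx⟩
        exact hx fun x hxe => hall x hxe
      · simp only [tildeChi, hF, he, if_true, hall, if_false, not_false_iff, and_true]
        cases hge : g e <;> simp [hge]
    simp_rw [integral_const_mul, hrw, pi_integral_prod]
    have hfac : ∀ e : Sym2 (Fin n), (∫ b, F e b ∂(bern p))
        = if e ∈ Eα then (if ∀ x ∈ e, s x = true then c else 0) else 1 := by
      intro e
      by_cases he : e ∈ Eα
      · by_cases hall : ∀ x ∈ e, s x = true
        · simp only [hF, he, if_true, if_pos hall, if_pos he, integral_const,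
            probReal_univ, one_smul]
        · simpa [hF, he, hall] using hchi
      · have h1 : ∫ b, F e b ∂(bern p) = ∫ _ : Bool, (1:ℝ) ∂(bern p) := by simp [hF, he]
        rw [h1, if_neg he, integral_const, probReal_univ, one_smul]
    simp_rw [hfac]
    rw [← Finset.prod_subset (Finset.subset_univ Eα) (fun e _ he => by simp [he])]
    have hprod : (∏ e ∈ Eα, if e ∈ Eα then (if ∀ x ∈ e, s x = true then c else 0) else 1)
        = ∏ e ∈ Eα, (if ∀ x ∈ e, s x = true then c else 0) :=
      Finset.prod_congr rfl fun e he => by simp [he]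
    rw [hprod]
    by_cases hV : ∀ v ∈ Vα, s v = true
    · have hall : ∀ e ∈ Eα, ∀ x ∈ e, s x = true := fun e he x hx =>
        hV x ((hVα x).mpr ⟨e, he, hx⟩)
      have hT : (∀ v ∈ Vα ∪ T, s v = true) ↔ (∀ t ∈ T, s t = true) := by
        constructor
        · exact fun h t ht => h t (Finset.mem_union_right _ ht)
        · intro h v hv
          rcases Finset.mem_union.mp hv with h' | h'
          · exact hV v h'
          · exact h v h'
      rw [Finset.prod_congr rfl fun e he => if_pos (hall e he), Finset.prod_const]
      rw [if_congr hT rfl rfl]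
    · push_neg at hV
      obtain ⟨v, hv, hsv⟩ := hV
      obtain ⟨e, he, hve⟩ := (hVα v).mp hv
      have h0 : (if ∀ x ∈ e, s x = true then c else 0) = 0 :=
        if_neg (by push_neg; exact ⟨v, hve, hsv⟩)
      rw [Finset.prod_eq_zero he h0]
      have : ¬ ∀ w ∈ Vα ∪ T, s w = true := by
        push_neg; exact ⟨v, Finset.mem_union_left _ hv, hsv⟩
      rw [if_neg this]
      ring
  -- Fubini and the outer integral over s
  rw [PlantedMeasure, integral_prod_symm _ Integrable.of_finite]
  simp_rw [key]
  set G : Fin n → Bool → ℝ := fun v b =>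
    if v ∈ Vα ∪ T then (if b = true then (1:ℝ) else 0) else 1 with hG
  have hrw2 : ∀ s : Fin n → Bool,
      (∏ v ∈ Vα ∪ T, if s v = true then (1:ℝ) else 0) = ∏ v, G v (s v) := by
    intro s
    rw [← Finset.prod_subset (Finset.subset_univ (Vα ∪ T))
      (fun v _ hv => by simp only [hG]; rw [if_neg hv])]
    exact Finset.prod_congr rfl fun v hv => by simp only [hG]; rw [if_pos hv]
  have key2 : ∀ s : Fin n → Bool,
      (if ∀ v ∈ Vα ∪ T, s v = true then (1:ℝ) else 0) * c ^ Eα.card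
        = (∏ v, G v (s v)) * c ^ Eα.card := by
    intro s
    congr 1
    by_cases h : ∀ v ∈ Vα ∪ T, s v = true
    · rw [if_pos h, ← hrw2 s]
      exact (Finset.prod_eq_one fun v hv => if_pos (h v hv)).symm
    · push_neg at h
      obtain ⟨v, hv, hsv⟩ := h
      have h0 : (if s v = true then (1:ℝ) else 0) = 0 := if_neg hsv
      rw [if_neg (by push_neg; exact ⟨v, hv, hsv⟩), ← hrw2 s]
      exact (Finset.prod_eq_zero hv h0).symm
  simp_rw [key2, integral_mul_const, pi_integral_prod]
  have hfac2 : ∀ v : Fin n, (∫ b, G v b ∂(bern (k/n)))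
      = if v ∈ Vα ∪ T then k / n else 1 := by
    intro v
    by_cases hv : v ∈ Vα ∪ T
    · simp only [hG]
      rw [bern_integral hq0 hq1]
      simp only [if_pos hv]
      norm_num
    · simp only [hG, if_neg hv, integral_const, probReal_univ, one_smul]
  simp_rw [hfac2]
  rw [← Finset.prod_subset (Finset.subset_univ (Vα ∪ T)) (fun v _ hv => by rw [if_neg hv])]
  rw [Finset.prod_congr rfl fun v hv => if_pos hv, Finset.prod_const]
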